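/- For every polynomial p in three variables of total degree at most 2, the supremum of |x_1 x_2 x_3 - p(x)| over the simplex T^3 = {x : x_i ≥ 0, x_1+x_2+x_3 ≤ 1} is at least 1/72. -/

import Mathlib

/-- The standard simplex `T³ = {x ∈ ℝ³ : xᵢ ≥ 0, x₁+x₂+x₃ ≤ 1}`. -/
def simplexT3 : Set (Fin 3 → ℝ) := {x | (∀ i, 0 ≤ x i) ∧ x 0 + x 1 + x 2 ≤ 1}

open MvPolynomial in
/-- The key numeric identity: the signed combination of point evaluations
(vertices with weight 1/24, edge midpoints with weight -1/6, centroid with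
weight 3/8) annihilates every monomial of total degree at most 2. -/
lemma keyNum_T3 (a b c : ℕ) (h : a + b + c ≤ 2) :
    (1/24 : ℝ)*((1:ℝ)^a*(0:ℝ)^b*(0:ℝ)^c + (0:ℝ)^a*1^b*0^c + (0:ℝ)^a*0^b*1^c)
    - (1/6)*((1/2:ℝ)^a*(1/2:ℝ)^b*(0:ℝ)^c + (1/2:ℝ)^a*0^b*(1/2:ℝ)^c + (0:ℝ)^a*(1/2:ℝ)^b*(1/2:ℝ)^c)
    + (3/8)*((1/3:ℝ)^a*(1/3:ℝ)^b*(1/3:ℝ)^c) = 0 := by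
  have ha : a ≤ 2 := by omega
  have hb : b ≤ 2 := by omega
  have hc : c ≤ 2 := by omega
  interval_cases a <;> interval_cases b <;> interval_cases c <;>
    first | (exfalso; omega) | norm_num

open MvPolynomial in
/-- The annihilation lemma: the functional kills every polynomial of total
degree at most 2. -/
lemma annihilate_T3 (p : MvPolynomial (Fin 3) ℝ) (hp : p.totalDegree ≤ 2) :
    (1/24 : ℝ)*(eval ![1,0,0] p + eval ![0,1,0] p + eval ![0,0,1] p)
    - (1/6)*(eval ![1/2,1/2,0] p + eval ![1/2,0,1/2] p + eval ![0,1/2,1/2] p)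
    + (3/8)*(eval ![1/3,1/3,1/3] p) = 0 := by
  have lin : ∀ (x : Fin 3 → ℝ), eval x p
      = ∑ d ∈ p.support, coeff d p * (x 0 ^ d 0 * x 1 ^ d 1 * x 2 ^ d 2) := by
    intro x
    rw [eval_eq']
    refine Finset.sum_congr rfl fun d _ => ?_
    rw [Fin.prod_univ_three]
  simp only [lin, Finset.mul_sum, ← Finset.sum_add_distrib, ← Finset.sum_sub_distrib]
  apply Finset.sum_eq_zero
  intro d hd
  have hdeg : d 0 + d 1 + d 2 ≤ 2 := by
    have h1 := le_totalDegree hd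
    have h2 : (d.sum fun _ e => e) = d 0 + d 1 + d 2 := by
      rw [Finsupp.sum_fintype _ _ (fun _ => rfl), Fin.sum_univ_three]
    omega
  have key := keyNum_T3 (d 0) (d 1) (d 2) hdeg
  simp only [Matrix.cons_val_zero, Matrix.cons_val_one, Matrix.head_cons,
    Matrix.cons_val_two, Matrix.tail_cons]
  linear_combination (coeff d p) * key

/-- For every polynomial `p` of total degree at most `2`, the supremum of
`|x₁x₂x₃ - p(x)|` over `T³` is at least `1/72`. -/
theorem best_approx_lower_bound_T3 (p : MvPolynomial (Fin 3) ℝ)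
    (hp : p.totalDegree ≤ 2) :
    1 / 72 ≤ sSup ((fun x => |x 0 * x 1 * x 2 - MvPolynomial.eval x p|) '' simplexT3) := by
  set f : (Fin 3 → ℝ) → ℝ := fun x => |x 0 * x 1 * x 2 - MvPolynomial.eval x p| with hf
  have hcont : Continuous f := by
    apply Continuous.abs
    exact (((continuous_apply 0).mul (continuous_apply 1)).mul (continuous_apply 2)).sub
      (MvPolynomial.continuous_eval p)
  have hclosed : IsClosed simplexT3 := by
    have h1 : IsClosed {x : Fin 3 → ℝ | ∀ i, 0 ≤ x i} := by
      have : {x : Fin 3 → ℝ | ∀ i, 0 ≤ x i} = ⋂ i, {x | 0 ≤ x i} := by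
        ext x; simp
      rw [this]
      exact isClosed_iInter fun i => isClosed_le continuous_const (continuous_apply i)
    have h2 : IsClosed {x : Fin 3 → ℝ | x 0 + x 1 + x 2 ≤ 1} :=
      isClosed_le (by continuity) continuous_const
    exact h1.inter h2
  have hcomp : IsCompact simplexT3 := by
    refine IsCompact.of_isClosed_subset
      (isCompact_Icc (a := fun _ : Fin 3 => (0:ℝ)) (b := fun _ => 1)) hclosed ?_
    rintro x ⟨h0, hs⟩
    rw [Set.mem_Icc]
    constructor
    · intro i; exact h0 i
    · intro i
      have := h0 0; have := h0 1; have := h0 2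
      fin_cases i
      · show x 0 ≤ 1; linarith
      · show x 1 ≤ 1; linarith
      · show x 2 ≤ 1; linarith
  have hbdd : BddAbove (f '' simplexT3) := (hcomp.image hcont).bddAbove
  have hle : ∀ x ∈ simplexT3, f x ≤ sSup (f '' simplexT3) :=
    fun x hx => le_csSup hbdd ⟨x, hx, rfl⟩
  set M := sSup (f '' simplexT3) with hM
  have mem : ∀ a b c : ℝ, 0 ≤ a → 0 ≤ b → 0 ≤ c → a + b + c ≤ 1 →
      (![a,b,c] : Fin 3 → ℝ) ∈ simplexT3 := by
    intro a b c ha hb hc habc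
    refine ⟨fun i => ?_, by exact habc⟩
    fin_cases i <;> simpa
  have h1 := hle ![1,0,0] (mem 1 0 0 (by norm_num) le_rfl le_rfl (by norm_num))
  have h2 := hle ![0,1,0] (mem 0 1 0 le_rfl (by norm_num) le_rfl (by norm_num))
  have h3 := hle ![0,0,1] (mem 0 0 1 le_rfl le_rfl (by norm_num) (by norm_num))
  have h4 := hle ![1/2,1/2,0] (mem (1/2) (1/2) 0 (by norm_num) (by norm_num) le_rfl (by norm_num))
  have h5 := hle ![1/2,0,1/2] (mem (1/2) 0 (1/2) (by norm_num) le_rfl (by norm_num) (by norm_num))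
  have h6 := hle ![0,1/2,1/2] (mem 0 (1/2) (1/2) le_rfl (by norm_num) (by norm_num) (by norm_num))
  have h7 := hle ![1/3,1/3,1/3] (mem (1/3) (1/3) (1/3) (by norm_num) (by norm_num) (by norm_num)
    (by norm_num))
  simp only [hf, Matrix.cons_val_zero, Matrix.cons_val_one, Matrix.head_cons,
    Matrix.cons_val_two, Matrix.tail_cons] at h1 h2 h3 h4 h5 h6 h7
  have hann := annihilate_T3 p hp
  set e1 := MvPolynomial.eval ![(1:ℝ),0,0] p
  set e2 := MvPolynomial.eval ![(0:ℝ),1,0] p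
  set e3 := MvPolynomial.eval ![(0:ℝ),0,1] p
  set e4 := MvPolynomial.eval ![(1/2:ℝ),1/2,0] p
  set e5 := MvPolynomial.eval ![(1/2:ℝ),0,1/2] p
  set e6 := MvPolynomial.eval ![(0:ℝ),1/2,1/2] p
  set e7 := MvPolynomial.eval ![(1/3:ℝ),1/3,1/3] p
  have a1 : (1*0*0 - e1) ≤ |1*0*0 - e1| := le_abs_self _
  have a2 : (0*1*0 - e2) ≤ |0*1*0 - e2| := le_abs_self _
  have a3 : (0*0*1 - e3) ≤ |0*0*1 - e3| := le_abs_self _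
  have a4 : -(1/2*(1/2)*0 - e4) ≤ |1/2*(1/2)*0 - e4| := neg_le_abs _
  have a5 : -(1/2*0*(1/2) - e5) ≤ |1/2*0*(1/2) - e5| := neg_le_abs _
  have a6 : -(0*(1/2)*(1/2) - e6) ≤ |0*(1/2)*(1/2) - e6| := neg_le_abs _
  have a7 : (1/3*(1/3)*(1/3) - e7) ≤ |1/3*(1/3)*(1/3) - e7| := le_abs_self _
  linarith [h1, h2, h3, h4, h5, h6, h7, a1, a2, a3, a4, a5, a6, a7, hann]
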